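/- Let λ₂ ≥ 0 and fix ε > 0. Let (β^k)_{k≥0} be a sequence in ℝ^p such that for every k, β^{k+1} is a global minimizer of G_{w(β^k)}. If some subsequence β^{k_j} converges to β̄ ∈ ℝ^p (with k_j strictly increasing), then β̄ is a global minimizer of G_{w(β̄)}, i.e. G_{w(β̄)}(β̄) ≤ G_{w(β̄)}(β) for all β ∈ ℝ^p. -/

import Mathlib

/-- Index for the ℓ_r norm with r ∈ {1, 2, ∞}. -/
inductive LrIndex : Type
  | one | two | inf

/-- The ℓ_r norm on ℝ^n for r ∈ {1, 2, ∞}. -/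
noncomputable def lrNorm {n : ℕ} (r : LrIndex) (z : Fin n → ℝ) : ℝ :=
  match r with
  | .one => ∑ j, |z j|
  | .two => Real.sqrt (∑ j, (z j) ^ 2)
  | .inf => ⨆ j, |z j|

/-- `v` is a subgradient of `z ↦ ‖z − y‖_r` at `z₀`. -/
def IsSubgradAt {n : ℕ} (r : LrIndex) (y v z₀ : Fin n → ℝ) : Prop :=
  ∀ z : Fin n → ℝ,
    lrNorm r (z₀ - y) + ∑ j, v j * (z j - z₀ j) ≤ lrNorm r (z - y)

/-- Weighted objective G_w(β) = ‖Xβ − y‖_r + λ₂‖β‖₂² + qλ₁ Σᵢ wᵢ|βᵢ|. -/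
noncomputable def objG {n p : ℕ} (r : LrIndex) (X : Matrix (Fin n) (Fin p) ℝ)
    (y : Fin n → ℝ) (lam1 lam2 q : ℝ) (w : Fin p → ℝ) (β : Fin p → ℝ) : ℝ :=
  lrNorm r (X.mulVec β - y) + lam2 * ∑ i, (β i) ^ 2 + q * lam1 * ∑ i, w i * |β i|

/-- The weight vector w(β) with w(β)ᵢ = u_ε if βᵢ = 0, and min(u_ε, |βᵢ|^{q−1}) otherwise. -/
noncomputable def weightVec {p : ℕ} (q uε : ℝ) (β : Fin p → ℝ) : Fin p → ℝ :=
  fun i => if β i = 0 then uε else min uε (|β i| ^ (q - 1))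

open Real Filter

/-- Tangent inequality for concave rpow. -/
lemma rpow_tangent {q : ℝ} (hq0 : 0 < q) (hq1 : q < 1) {s t : ℝ} (hs : 0 ≤ s) (ht : 0 < t) :
    s ^ q ≤ t ^ q + q * t ^ (q - 1) * (s - t) := by
  have hx : -1 ≤ s / t - 1 := by
    have : 0 ≤ s / t := div_nonneg hs ht.le
    linarith
  have key := rpow_one_add_le_one_add_mul_self (s := s / t - 1) hx hq0.le hq1.le
  have h1 : (1 + (s / t - 1)) = s / t := by ring
  rw [h1] at key
  have hd : (s / t) ^ q = s ^ q / t ^ q := Real.div_rpow hs ht.le q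
  rw [hd] at key
  have htq : (0:ℝ) < t ^ q := Real.rpow_pos_of_pos ht q
  have key2 : s ^ q ≤ (1 + q * (s / t - 1)) * t ^ q := by
    rw [div_le_iff₀ htq] at key; linarith
  have h2 : t ^ (q - 1) = t ^ q / t := by
    rw [Real.rpow_sub ht, Real.rpow_one]
  calc s ^ q ≤ (1 + q * (s / t - 1)) * t ^ q := key2
    _ = t ^ q + q * (t ^ q / t) * (s - t) := by field_simp
    _ = t ^ q + q * t ^ (q - 1) * (s - t) := by rw [h2]

/-- Continuous weight function. -/
noncomputable def gW (τ q t : ℝ) : ℝ := (max t τ) ^ (q - 1)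

/-- Concave penalty. -/
noncomputable def phiF (τ q t : ℝ) : ℝ :=
  if t ≤ τ then q * τ ^ (q - 1) * t else t ^ q + (q - 1) * τ ^ q

lemma weightVec_eq {p : ℕ} {q τ : ℝ} (hq1 : q < 1) (hτ : 0 < τ) (β : Fin p → ℝ) (i : Fin p) :
    weightVec q (τ ^ (q - 1)) β i = gW τ q |β i| := by
  unfold weightVec gW
  by_cases h : β i = 0
  · simp [h, max_eq_right hτ.le]
  · rw [if_neg h]
    rcases le_or_gt (|β i|) τ with hle | hlt
    · rw [max_eq_right hle, min_eq_left]
      exact Real.rpow_le_rpow_of_nonpos (abs_pos.mpr h) hle (by linarith)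
    · rw [max_eq_left hlt.le, min_eq_right]
      exact Real.rpow_le_rpow_of_nonpos hτ hlt.le (by linarith)

lemma tau_rpow_mul {τ q : ℝ} (hτ : 0 < τ) : τ ^ (q - 1) * τ = τ ^ q := by
  rw [← Real.rpow_add_one hτ.ne' (q - 1)]; ring_nf

/-- Tangent/majorization inequality for phiF with slope q * gW. -/
lemma phi_tangent {q τ : ℝ} (hq0 : 0 < q) (hq1 : q < 1) (hτ : 0 < τ)
    {s t : ℝ} (hs : 0 ≤ s) (ht : 0 ≤ t) :
    phiF τ q s ≤ phiF τ q t + q * gW τ q t * (s - t) := by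
  have hτq : τ ^ (q - 1) * τ = τ ^ q := tau_rpow_mul hτ
  unfold phiF gW
  by_cases hts : t ≤ τ
  · rw [if_pos hts, max_eq_right hts]
    by_cases hsτ : s ≤ τ
    · rw [if_pos hsτ]; ring_nf; rfl  -- equality; fix later if needed
    · rw [if_neg hsτ]
      push_neg at hsτ
      have hB := rpow_tangent hq0 hq1 hs hτ (t := τ)
      nlinarith
  · rw [if_neg hts, max_eq_left (le_of_not_ge hts)]
    push_neg at hts
    have ht0 : 0 < t := hτ.trans hts
    by_cases hsτ : s ≤ τ
    · rw [if_pos hsτ]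
      have hA := rpow_tangent hq0 hq1 hτ.le ht0 (s := τ)
      have hmono : t ^ (q - 1) ≤ τ ^ (q - 1) :=
        Real.rpow_le_rpow_of_nonpos hτ hts.le (by linarith)
      have hB : q * (τ - s) * t ^ (q - 1) ≤ q * (τ - s) * τ ^ (q - 1) :=
        mul_le_mul_of_nonneg_left hmono (by nlinarith)
      nlinarith
    · rw [if_neg hsτ]
      have hA := rpow_tangent hq0 hq1 hs ht0
      linarith

lemma phi_lb {q τ : ℝ} (hq0 : 0 < q) (hq1 : q < 1) (hτ : 0 < τ) {t : ℝ} (ht : 0 ≤ t) :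
    (q - 1) * τ ^ q ≤ phiF τ q t := by
  have h1 : 0 < τ ^ q := Real.rpow_pos_of_pos hτ q
  have h2 : 0 < τ ^ (q - 1) := Real.rpow_pos_of_pos hτ _
  unfold phiF
  split_ifs with h
  · nlinarith [mul_nonneg (mul_nonneg hq0.le h2.le) ht]
  · have := Real.rpow_nonneg ht q; linarith

lemma phiF_continuous {q τ : ℝ} (hq0 : 0 < q) (hτ : 0 < τ) : Continuous (phiF τ q) := by
  unfold phiF
  apply Continuous.if_le
  · exact (continuous_const.mul continuous_id)
  · exact (Real.continuous_rpow_const hq0.le).add continuous_const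
  · exact continuous_id
  · exact continuous_const
  · intro x hx
    rw [hx, mul_assoc, tau_rpow_mul hτ]; ring

lemma gW_continuous {q τ : ℝ} (hτ : 0 < τ) : Continuous (gW τ q) := by
  rw [continuous_iff_continuousAt]
  intro t
  have h1 : ContinuousAt (fun s : ℝ => max s τ) t :=
    (continuous_id.max continuous_const).continuousAt
  exact h1.rpow_const (Or.inl (ne_of_gt (lt_of_lt_of_le hτ (le_max_right _ _))))

lemma lrNorm_continuous {n : ℕ} (hn : 0 < n) (r : LrIndex) :
    Continuous fun z : Fin n → ℝ => lrNorm r z := by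
  cases r
  · exact continuous_finset_sum _ fun j _ => (continuous_apply j).abs
  · exact Real.continuous_sqrt.comp
      (continuous_finset_sum _ fun j _ => (continuous_apply j).pow 2)
  · haveI : Nonempty (Fin n) := Fin.pos_iff_nonempty.mp hn
    have he : (fun z : Fin n → ℝ => lrNorm LrIndex.inf z)
        = fun z => Finset.univ.sup' Finset.univ_nonempty (fun j => |z j|) := by
      funext z; rw [Finset.sup'_univ_eq_ciSup]; rfl
    rw [he, continuous_iff_continuousAt]
    intro z
    exact ContinuousAt.finset_sup'_apply _ fun j _ => ((continuous_apply j).abs).continuousAt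

lemma lrNorm_nonneg {n : ℕ} (r : LrIndex) (z : Fin n → ℝ) : 0 ≤ lrNorm r z := by
  cases r
  · exact Finset.sum_nonneg fun j _ => abs_nonneg _
  · exact Real.sqrt_nonneg _
  · exact Real.iSup_nonneg fun j => abs_nonneg _

lemma descent {n p : ℕ} (r : LrIndex) (X : Matrix (Fin n) (Fin p) ℝ) (y : Fin n → ℝ)
    {lam1 lam2 q τ : ℝ} (hlam1 : 0 < lam1) (hq0 : 0 < q) (hq1 : q < 1) (hτ : 0 < τ)
    (β β' : Fin p → ℝ) :
    (lrNorm r (X.mulVec β' - y) + lam2 * ∑ i, (β' i) ^ 2 + lam1 * ∑ i, phiF τ q |β' i|)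
      + objG r X y lam1 lam2 q (weightVec q (τ ^ (q - 1)) β) β
    ≤ (lrNorm r (X.mulVec β - y) + lam2 * ∑ i, (β i) ^ 2 + lam1 * ∑ i, phiF τ q |β i|)
      + objG r X y lam1 lam2 q (weightVec q (τ ^ (q - 1)) β) β' := by
  have key : ∀ i, phiF τ q |β' i| + q * weightVec q (τ ^ (q - 1)) β i * |β i|
      ≤ phiF τ q |β i| + q * weightVec q (τ ^ (q - 1)) β i * |β' i| := by
    intro i
    rw [weightVec_eq hq1 hτ]
    have h := phi_tangent hq0 hq1 hτ (abs_nonneg (β' i)) (abs_nonneg (β i))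
    nlinarith [h]
  have h1 : ∑ i, (phiF τ q |β' i| + q * weightVec q (τ ^ (q - 1)) β i * |β i|)
      ≤ ∑ i, (phiF τ q |β i| + q * weightVec q (τ ^ (q - 1)) β i * |β' i|) :=
    Finset.sum_le_sum fun i _ => key i
  rw [Finset.sum_add_distrib, Finset.sum_add_distrib] at h1
  have h2 := mul_le_mul_of_nonneg_left h1 hlam1.le
  have e : ∀ γ : Fin p → ℝ, lam1 * ∑ i, q * weightVec q (τ ^ (q - 1)) β i * |γ i|
      = q * lam1 * ∑ i, weightVec q (τ ^ (q - 1)) β i * |γ i| := by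
    intro γ
    rw [Finset.mul_sum, Finset.mul_sum]
    exact Finset.sum_congr rfl fun i _ => by ring
  rw [mul_add, mul_add, e β, e β'] at h2
  simp only [objG]
  linarith

set_option maxHeartbeats 1000000

/-- a subsequential limit β̄ of the reweighted iterates is a global
minimizer of G_{w(β̄)}. -/
theorem accumulation_minimizes_G {n p : ℕ} (hn : 0 < n) (hp : 0 < p)
    (r : LrIndex) (X : Matrix (Fin n) (Fin p) ℝ) (y : Fin n → ℝ)
    (lam1 lam2 q ε : ℝ) (hlam1 : 0 < lam1) (hlam2 : 0 ≤ lam2)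
    (hq0 : 0 < q) (hq1 : q < 1) (hε : 0 < ε)
    (βseq : ℕ → Fin p → ℝ)
    (hseq : ∀ k : ℕ, ∀ β : Fin p → ℝ,
      objG r X y lam1 lam2 q
          (weightVec q ((ε / (p * lam1)) ^ ((q - 1) / q)) (βseq k)) (βseq (k + 1))
        ≤ objG r X y lam1 lam2 q
          (weightVec q ((ε / (p * lam1)) ^ ((q - 1) / q)) (βseq k)) β)
    (βbar : Fin p → ℝ) (ks : ℕ → ℕ) (hks : StrictMono ks)
    (hconv : Filter.Tendsto (fun j => βseq (ks j)) Filter.atTop (nhds βbar)) :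
    ∀ β : Fin p → ℝ,
      objG r X y lam1 lam2 q
          (weightVec q ((ε / (p * lam1)) ^ ((q - 1) / q)) βbar) βbar
        ≤ objG r X y lam1 lam2 q
          (weightVec q ((ε / (p * lam1)) ^ ((q - 1) / q)) βbar) β := by
  intro β
  set u : ℝ := (ε / (p * lam1)) ^ ((q - 1) / q) with hu
  have hpl : (0:ℝ) < (p : ℝ) * lam1 := mul_pos (by exact_mod_cast hp) hlam1
  have hu0 : 0 < u := Real.rpow_pos_of_pos (div_pos hε hpl) _
  set τ : ℝ := u ^ (1 / (q - 1)) with hτdef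
  have hτ : 0 < τ := Real.rpow_pos_of_pos hu0 _
  have hqne : q - 1 ≠ 0 := sub_ne_zero_of_ne (ne_of_lt hq1)
  have huτ : τ ^ (q - 1) = u := by
    rw [hτdef, ← Real.rpow_mul hu0.le, one_div, inv_mul_cancel₀ hqne, Real.rpow_one]
  rw [← huτ] at hseq ⊢
  set Φ : (Fin p → ℝ) → ℝ := fun b =>
    lrNorm r (X.mulVec b - y) + lam2 * ∑ i, (b i) ^ 2 + lam1 * ∑ i, phiF τ q |b i|
    with hΦdef
  have hdesc : ∀ b b' : Fin p → ℝ,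
      Φ b' + objG r X y lam1 lam2 q (weightVec q (τ ^ (q - 1)) b) b
        ≤ Φ b + objG r X y lam1 lam2 q (weightVec q (τ ^ (q - 1)) b) b' :=
    fun b b' => descent r X y hlam1 hq0 hq1 hτ b b'
  -- continuity of the linear map
  have hmv : Continuous fun b : Fin p → ℝ => X.mulVec b - y := by
    refine Continuous.sub ?_ continuous_const
    refine continuous_pi fun j => ?_
    simp only [Matrix.mulVec, dotProduct]
    exact continuous_finset_sum _ fun i _ => continuous_const.mul (continuous_apply i)
  have hΦcont : Continuous Φ := by
    rw [hΦdef]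
    exact (((lrNorm_continuous hn r).comp hmv).add
      (continuous_const.mul (continuous_finset_sum _ fun i _ => (continuous_apply i).pow 2))).add
      (continuous_const.mul (continuous_finset_sum _ fun i _ =>
        (phiF_continuous hq0 hτ).comp ((continuous_apply i).abs)))
  have hdiag : Continuous fun b : Fin p → ℝ =>
      objG r X y lam1 lam2 q (weightVec q (τ ^ (q - 1)) b) b := by
    have he : (fun b : Fin p → ℝ => objG r X y lam1 lam2 q (weightVec q (τ ^ (q - 1)) b) b)
        = fun b => lrNorm r (X.mulVec b - y) + lam2 * ∑ i, (b i) ^ 2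
            + q * lam1 * ∑ i, gW τ q |b i| * |b i| := by
      funext b
      simp only [objG]
      have : ∑ i, weightVec q (τ ^ (q - 1)) b i * |b i| = ∑ i, gW τ q |b i| * |b i| :=
        Finset.sum_congr rfl fun i _ => by rw [weightVec_eq hq1 hτ]
      rw [this]
    rw [he]
    exact (((lrNorm_continuous hn r).comp hmv).add
      (continuous_const.mul (continuous_finset_sum _ fun i _ => (continuous_apply i).pow 2))).add
      (continuous_const.mul (continuous_finset_sum _ fun i _ =>
        (((gW_continuous hτ).comp ((continuous_apply i).abs)).mul ((continuous_apply i).abs))))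
  have hfix : Continuous fun b : Fin p → ℝ =>
      objG r X y lam1 lam2 q (weightVec q (τ ^ (q - 1)) b) β := by
    have he : (fun b : Fin p → ℝ => objG r X y lam1 lam2 q (weightVec q (τ ^ (q - 1)) b) β)
        = fun b => lrNorm r (X.mulVec β - y) + lam2 * ∑ i, (β i) ^ 2
            + q * lam1 * ∑ i, gW τ q |b i| * |β i| := by
      funext b
      simp only [objG]
      have : ∑ i, weightVec q (τ ^ (q - 1)) b i * |β i| = ∑ i, gW τ q |b i| * |β i| :=
        Finset.sum_congr rfl fun i _ => by rw [weightVec_eq hq1 hτ]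
      rw [this]
    rw [he]
    exact continuous_const.add (continuous_const.mul (continuous_finset_sum _ fun i _ =>
      (((gW_continuous hτ).comp ((continuous_apply i).abs)).mul continuous_const)))
  -- monotone descent
  have hdec : ∀ k, Φ (βseq (k + 1)) ≤ Φ (βseq k) := by
    intro k
    have h1 := hdesc (βseq k) (βseq (k + 1))
    have h2 := hseq k (βseq k)
    linarith
  have hanti : Antitone fun k => Φ (βseq k) := antitone_nat_of_succ_le hdec
  have hbdd : BddBelow (Set.range fun k => Φ (βseq k)) := by
    refine ⟨lam1 * ((p : ℝ) * ((q - 1) * τ ^ q)), ?_⟩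
    rintro x ⟨k, rfl⟩
    have hφ : (p : ℝ) * ((q - 1) * τ ^ q) ≤ ∑ i, phiF τ q |βseq k i| := by
      calc (p : ℝ) * ((q - 1) * τ ^ q) = ∑ _i : Fin p, (q - 1) * τ ^ q := by
            rw [Finset.sum_const, Finset.card_univ, Fintype.card_fin, nsmul_eq_mul]
        _ ≤ ∑ i, phiF τ q |βseq k i| :=
            Finset.sum_le_sum fun i _ => phi_lb hq0 hq1 hτ (abs_nonneg _)
    have h1 := lrNorm_nonneg r (X.mulVec (βseq k) - y)
    have h2 : 0 ≤ lam2 * ∑ i, (βseq k i) ^ 2 :=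
      mul_nonneg hlam2 (Finset.sum_nonneg fun i _ => sq_nonneg _)
    have h3 := mul_le_mul_of_nonneg_left hφ hlam1.le
    simp only [hΦdef]
    linarith
  obtain ⟨L, hL⟩ : ∃ L, Filter.Tendsto (fun k => Φ (βseq k)) Filter.atTop (nhds L) :=
    ⟨_, tendsto_atTop_ciInf hanti hbdd⟩
  have hks1 : Filter.Tendsto (fun j => ks j + 1) Filter.atTop Filter.atTop :=
    Filter.tendsto_atTop_mono (fun j => Nat.le_succ (ks j)) hks.tendsto_atTop
  have hΦ1 : Filter.Tendsto (fun j => Φ (βseq (ks j))) Filter.atTop (nhds L) :=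
    hL.comp hks.tendsto_atTop
  have hΦ2 : Filter.Tendsto (fun j => Φ (βseq (ks j + 1))) Filter.atTop (nhds L) :=
    hL.comp hks1
  have hA : Filter.Tendsto (fun j =>
      objG r X y lam1 lam2 q (weightVec q (τ ^ (q - 1)) (βseq (ks j))) (βseq (ks j)))
      Filter.atTop (nhds (objG r X y lam1 lam2 q (weightVec q (τ ^ (q - 1)) βbar) βbar)) :=
    (hdiag.tendsto βbar).comp hconv
  have hB : Filter.Tendsto (fun j =>
      objG r X y lam1 lam2 q (weightVec q (τ ^ (q - 1)) (βseq (ks j))) β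
        + (Φ (βseq (ks j)) - Φ (βseq (ks j + 1))))
      Filter.atTop
      (nhds (objG r X y lam1 lam2 q (weightVec q (τ ^ (q - 1)) βbar) β + (L - L))) :=
    ((hfix.tendsto βbar).comp hconv).add (hΦ1.sub hΦ2)
  have hle : ∀ j : ℕ,
      objG r X y lam1 lam2 q (weightVec q (τ ^ (q - 1)) (βseq (ks j))) (βseq (ks j))
        ≤ objG r X y lam1 lam2 q (weightVec q (τ ^ (q - 1)) (βseq (ks j))) β
          + (Φ (βseq (ks j)) - Φ (βseq (ks j + 1))) := by
    intro j
    have h1 := hdesc (βseq (ks j)) (βseq (ks j + 1))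
    have h2 := hseq (ks j) β
    linarith
  have hfinal := le_of_tendsto_of_tendsto' hA hB hle
  linarith
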